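/- Let e₀, e₁, e₂ be real numbers with e₀ > 0, e₂ > 0 and e₁² < 4e₀e₂, and let k be an even positive integer not divisible by 3. Then the integral from −π/2 to π/2 of cos(kθ)/(e₀ sin²(3θ) + e₁ sin(3θ)cos(3θ) + e₂ cos²(3θ)) dθ equals 0. -/

import Mathlib

open Real

theorem cos_integral_vanishes (e₀ e₁ e₂ : ℝ) (he₀ : 0 < e₀) (he₂ : 0 < e₂)
    (he₁ : e₁ ^ 2 < 4 * e₀ * e₂) (k : ℕ) (hk : 0 < k) (hke : Even k) (hk3 : ¬ (3 ∣ k)) :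
    ∫ θ in (-(π / 2))..(π / 2), Real.cos (k * θ) /
      (e₀ * Real.sin (3 * θ) ^ 2 + e₁ * Real.sin (3 * θ) * Real.cos (3 * θ) +
        e₂ * Real.cos (3 * θ) ^ 2) = 0 := by
  set D : ℝ → ℝ := fun θ =>
    e₀ * Real.sin (3 * θ) ^ 2 + e₁ * Real.sin (3 * θ) * Real.cos (3 * θ) +
      e₂ * Real.cos (3 * θ) ^ 2 with hD
  set h : ℝ → ℝ := fun θ => Real.cos (k * θ) / D θ with hh
  have hDpos : ∀ θ, 0 < D θ := by
    intro θ
    have hsc : Real.sin (3 * θ) ^ 2 + Real.cos (3 * θ) ^ 2 = 1 := Real.sin_sq_add_cos_sq _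
    simp only [hD]
    nlinarith [sq_nonneg (2 * e₀ * Real.sin (3 * θ) + e₁ * Real.cos (3 * θ)),
      sq_nonneg (2 * e₂ * Real.cos (3 * θ) + e₁ * Real.sin (3 * θ)), he₀, he₂, he₁]
  have hDne : ∀ θ, D θ ≠ 0 := fun θ => ne_of_gt (hDpos θ)
  -- D has period π/3
  have hDper : ∀ θ, D (θ + π / 3) = D θ := by
    intro θ
    have h3 : 3 * (θ + π / 3) = 3 * θ + π := by ring
    simp only [hD, h3, Real.sin_add_pi, Real.cos_add_pi]
    ring
  -- k even and not divisible by 3: cos(kπ/3) = -1/2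
  have hkmod : k % 6 = 2 ∨ k % 6 = 4 := by
    have h2 : k % 2 = 0 := Nat.even_iff.mp hke
    have h3 : k % 3 ≠ 0 := fun h => hk3 (Nat.dvd_of_mod_eq_zero h)
    omega
  have hcosk : Real.cos ((k : ℝ) * (π / 3)) = -(1 / 2) := by
    have hn : k = k % 6 + 6 * (k / 6) := by omega
    have hksplit : (k : ℝ) = (k % 6 : ℕ) + 6 * ((k / 6 : ℕ) : ℝ) := by
      exact_mod_cast congrArg (Nat.cast : ℕ → ℝ) hn
    have : (k : ℝ) * (π / 3) = ((k % 6 : ℕ) : ℝ) * (π / 3) + (k / 6 : ℕ) * (2 * π) := by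
      rw [hksplit]; push_cast; ring
    rw [this, Real.cos_add_nat_mul_two_pi]
    rcases hkmod with h | h <;> rw [h]
    · push_cast
      have : (2 : ℝ) * (π / 3) = π - π / 3 := by ring
      rw [this, Real.cos_pi_sub, Real.cos_pi_div_three]
    · push_cast
      have : (4 : ℝ) * (π / 3) = π + π / 3 := by ring
      rw [this, Real.cos_add, Real.cos_pi, Real.sin_pi, Real.cos_pi_div_three]
      ring
  -- pointwise identity: h(θ+π/3) + h(θ-π/3) = -h θ
  have hkey : ∀ θ, h (θ + π / 3) + h (θ - π / 3) = -h θ := by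
    intro θ
    have hD1 : D (θ + π / 3) = D θ := hDper θ
    have hD2 : D (θ - π / 3) = D θ := by
      have := hDper (θ - π / 3)
      rw [sub_add_cancel] at this
      exact this.symm
    have hnum : Real.cos ((k : ℝ) * (θ + π / 3)) + Real.cos ((k : ℝ) * (θ - π / 3)) =
        -Real.cos ((k : ℝ) * θ) := by
      have e1 : (k : ℝ) * (θ + π / 3) = (k : ℝ) * θ + (k : ℝ) * (π / 3) := by ring
      have e2 : (k : ℝ) * (θ - π / 3) = (k : ℝ) * θ - (k : ℝ) * (π / 3) := by ring
      rw [e1, e2, Real.cos_add, Real.cos_sub, hcosk]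
      ring
    simp only [hh, hD1, hD2, ← add_div, hnum, neg_div]
  -- h has period π
  have hper : Function.Periodic h π := by
    intro θ
    have hDpi : D (θ + π) = D θ := by
      have h1 := hDper θ
      have h2 := hDper (θ + π / 3)
      have h3 := hDper (θ + π / 3 + π / 3)
      have e : θ + π / 3 + π / 3 + π / 3 = θ + π := by ring
      rw [e] at h3
      rw [h3, h2, h1]
    obtain ⟨m, hm⟩ := hke
    have hcos : Real.cos ((k : ℝ) * (θ + π)) = Real.cos ((k : ℝ) * θ) := by
      have : (k : ℝ) * (θ + π) = (k : ℝ) * θ + (m : ℕ) * (2 * π) := by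
        have : (k : ℝ) = 2 * m := by rw [hm]; push_cast; ring
        rw [this]; ring
      rw [this, Real.cos_add_nat_mul_two_pi]
    simp only [hh, hDpi, hcos]
  -- continuity and integrability
  have hcont : Continuous h := by
    apply Continuous.div
    · fun_prop
    · fun_prop
    · exact hDne
  -- shift-invariance of the integral
  have hshift : ∀ c : ℝ, (∫ θ in (-(π / 2))..(π / 2), h (θ + c)) =
      ∫ θ in (-(π / 2))..(π / 2), h θ := by
    intro c
    rw [intervalIntegral.integral_comp_add_right h c]
    have e1 : π / 2 + c = -(π / 2) + c + π := by ring
    have e2 : (π / 2 : ℝ) = -(π / 2) + π := by ring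
    rw [e1, hper.intervalIntegral_add_eq (-(π / 2) + c) (-(π / 2)), ← e2]
  set I := ∫ θ in (-(π / 2))..(π / 2), h θ with hI
  have hint : ∀ c : ℝ, IntervalIntegrable (fun θ => h (θ + c)) MeasureTheory.volume
      (-(π / 2)) (π / 2) := fun c => (hcont.comp (by fun_prop)).intervalIntegrable _ _
  have key : I + I = -I := by
    calc I + I = (∫ θ in (-(π / 2))..(π / 2), h (θ + π / 3)) +
          ∫ θ in (-(π / 2))..(π / 2), h (θ + -(π / 3)) := by
          rw [hshift (π / 3), hshift (-(π / 3))]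
      _ = ∫ θ in (-(π / 2))..(π / 2), (h (θ + π / 3) + h (θ + -(π / 3))) := by
          rw [intervalIntegral.integral_add (hint (π / 3)) (hint (-(π / 3)))]
      _ = ∫ θ in (-(π / 2))..(π / 2), -h θ := by
          apply intervalIntegral.integral_congr
          intro θ _
          show h (θ + π / 3) + h (θ + -(π / 3)) = -h θ
          rw [← sub_eq_add_neg]
          exact hkey θ
      _ = -I := by rw [intervalIntegral.integral_neg]
  have : I = 0 := by linarith
  simpa [hI, hh, hD] using this
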